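/- Let T₁ and T₂ be two spanning trees of a connected finite graph G. Then T₂ can be obtained from T₁ by a finite sequence of elementary moves, where an elementary move removes one edge of the current spanning tree and adds one edge of G not in the tree, both incident to a common vertex of the tree, yielding again a spanning tree. -/

import Mathlib

variable {V : Type*}

/-- `s` is the edge set of a spanning tree of `G`: all its edges are edges of `G`,
and the graph formed by these edges is a tree on the full vertex set. -/
def IsSpanningTreeEdges (G : SimpleGraph V) (s : Finset (Sym2 V)) : Prop :=
  ↑s ⊆ G.edgeSet ∧ (SimpleGraph.fromEdgeSet (↑s : Set (Sym2 V))).IsTree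

/-- An elementary move on spanning trees of `G`: remove an edge `e` of the current spanning
tree and add an edge `f` of `G` not in the tree, both incident to a common vertex `v`,
in such a way that the result is again a spanning tree. -/
def ElemMove [DecidableEq V] (G : SimpleGraph V) (s t : Finset (Sym2 V)) : Prop :=
  ∃ e ∈ s, ∃ f ∈ G.edgeSet, f ∉ s ∧ (∃ v : V, v ∈ e ∧ v ∈ f) ∧
    t = insert f (s.erase e) ∧ IsSpanningTreeEdges G t

open SimpleGraph Walk

namespace STAux

lemma reach_trans {H K : SimpleGraph V}
    (h : ∀ ⦃x y : V⦄, H.Adj x y → K.Reachable x y) {u v : V}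
    (huv : H.Reachable u v) : K.Reachable u v := by
  obtain ⟨w⟩ := huv
  induction w with
  | nil => exact Reachable.refl _
  | cons hab p ih => exact (h hab).trans ih

lemma exchange [DecidableEq V] {G : SimpleGraph V} {r : Finset (Sym2 V)}
    (hr : IsSpanningTreeEdges G r) {a c : V}
    (hGg : s(a, c) ∈ G.edgeSet) (hgr : s(a, c) ∉ r)
    (q : (SimpleGraph.fromEdgeSet (↑r : Set (Sym2 V))).Walk a c) (hq : q.IsPath)
    {e : Sym2 V} (he : e ∈ q.edges) :
    IsSpanningTreeEdges G (insert s(a, c) (r.erase e)) := by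
  have hadj : G.Adj a c := hGg
  have hac : a ≠ c := hadj.ne
  have hqr : ∀ x ∈ q.edges, x ∈ r ∧ ¬x.IsDiag := by
    intro x hx
    have := q.edges_subset_edgeSet hx
    rw [edgeSet_fromEdgeSet] at this
    exact ⟨by exact_mod_cast this.1, this.2⟩
  have her : e ∈ r := (hqr e he).1
  have hee : e ≠ s(a, c) := fun h => hgr (h ▸ her)
  refine ⟨?_, ?_, ?_⟩
  · intro x hx
    simp only [Finset.coe_insert, Set.mem_insert_iff, Finset.mem_coe, Finset.mem_erase] at hx
    rcases hx with rfl | ⟨-, hx⟩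
    · exact hGg
    · exact hr.1 hx
  · -- connected
    have hconn := hr.2.isConnected
    have hne : Nonempty V := hconn.nonempty
    -- the auxiliary graph containing both `e` and the new edges
    set H : SimpleGraph V :=
      SimpleGraph.fromEdgeSet ({e} ∪ (↑(insert s(a, c) (r.erase e)) : Set (Sym2 V))) with hH
    have hqH : ∀ x ∈ q.edges, x ∈ H.edgeSet := by
      intro x hx
      rw [hH, edgeSet_fromEdgeSet]
      refine ⟨?_, fun hd => (hqr x hx).2 hd⟩
      by_cases hxe : x = e
      · exact Or.inl hxe
      · exact Or.inr (by
          simp only [Finset.coe_insert, Set.mem_insert_iff, Finset.mem_coe, Finset.mem_erase]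
          exact Or.inr ⟨hxe, (hqr x hx).1⟩)
    have q' := q.transfer H hqH
    have hq' : (q.transfer H hqH).IsPath := hq.transfer hqH
    have key : ∀ ⦃x y : V⦄, (SimpleGraph.fromEdgeSet (↑r : Set (Sym2 V))).Adj x y →
        (SimpleGraph.fromEdgeSet (↑(insert s(a, c) (r.erase e)) : Set (Sym2 V))).Reachable x y := by
      intro x y hxy
      rw [fromEdgeSet_adj] at hxy
      obtain ⟨hmem, hne'⟩ := hxy
      by_cases hxe : s(x, y) = e
      · -- go around the cycle
        have hHadj : H.Adj a c := by
          rw [hH, fromEdgeSet_adj]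
          exact ⟨Or.inr (by simp), hac⟩
        have hcyc : (Walk.cons hHadj (q.transfer H hqH).reverse).IsCycle := by
          rw [Walk.cons_isCycle_iff]
          refine ⟨hq'.reverse, ?_⟩
          rw [Walk.edges_reverse, List.mem_reverse, Walk.edges_transfer]
          intro hgq
          exact hgr (hqr _ hgq).1
        have hmem' : s(x, y) ∈ (Walk.cons hHadj (q.transfer H hqH).reverse).edges := by
          rw [Walk.edges_cons, List.mem_cons]
          refine Or.inr ?_
          rw [Walk.edges_reverse, List.mem_reverse, Walk.edges_transfer]
          exact hxe ▸ he
        have hreach := (adj_and_reachable_delete_edges_iff_exists_cycle.2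
          ⟨a, _, hcyc, hmem'⟩).2
        refine hreach.mono ?_
        intro u v huv
        rw [deleteEdges, sdiff_adj, hH, fromEdgeSet_adj, fromEdgeSet_adj] at huv
        obtain ⟨⟨humem, hune⟩, hnot⟩ := huv
        rw [fromEdgeSet_adj]
        refine ⟨?_, hune⟩
        rcases humem with h1 | h1
        · exact absurd ((fromEdgeSet_adj _).2 ⟨by rw [hxe]; exact h1, hune⟩) hnot
        · exact h1
      · refine Adj.reachable ?_
        rw [fromEdgeSet_adj]
        refine ⟨?_, hne'⟩
        simp only [Finset.coe_insert, Set.mem_insert_iff, Finset.mem_coe, Finset.mem_erase]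
        exact Or.inr ⟨hxe, hmem⟩
    exact Connected.mk (fun u v => reach_trans key (hconn.preconnected u v))
  · -- acyclic
    intro u c0 hc0
    by_cases hgc : s(a, c) ∈ c0.edges
    · -- the cycle uses the new edge, giving a second path from `a` to `c` in `r`
      have hreach := (adj_and_reachable_delete_edges_iff_exists_cycle.2 ⟨u, c0, hc0, hgc⟩).2
      have hle : SimpleGraph.fromEdgeSet (↑(insert s(a, c) (r.erase e)) : Set (Sym2 V)) \
          SimpleGraph.fromEdgeSet {s(a, c)} ≤
          SimpleGraph.fromEdgeSet (↑(r.erase e) : Set (Sym2 V)) := by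
        intro x y hxy
        rw [sdiff_adj, fromEdgeSet_adj, fromEdgeSet_adj] at hxy
        obtain ⟨⟨hxmem, hxne⟩, hxnot⟩ := hxy
        rw [fromEdgeSet_adj]
        refine ⟨?_, hxne⟩
        simp only [Finset.coe_insert, Set.mem_insert_iff, Finset.mem_coe] at hxmem
        rcases hxmem with h1 | h1
        · exact absurd ((fromEdgeSet_adj _).2 ⟨h1 ▸ rfl, hxne⟩) hxnot
        · exact h1
      obtain ⟨w⟩ := hreach.mono hle
      have hwsub : ∀ x ∈ w.edges, x ∈ (SimpleGraph.fromEdgeSet (↑r : Set (Sym2 V))).edgeSet := by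
        intro x hx
        have := w.edges_subset_edgeSet hx
        rw [edgeSet_fromEdgeSet] at this ⊢
        exact ⟨Finset.mem_coe.2 (Finset.mem_of_mem_erase (Finset.mem_coe.1 this.1)), this.2⟩
      have hwe : e ∉ w.edges := by
        intro hx
        have := w.edges_subset_edgeSet hx
        rw [edgeSet_fromEdgeSet] at this
        exact Finset.notMem_erase e r (Finset.mem_coe.1 this.1)
      set w' := w.transfer _ hwsub with hw'
      have hp2 := (hr.2.existsUnique_path a c).unique hq (w'.toPath.2)
      have : e ∈ (w'.toPath : (SimpleGraph.fromEdgeSet (↑r : Set (Sym2 V))).Walk a c).edges :=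
        hp2 ▸ he
      have := w'.edges_toPath_subset this
      rw [hw', Walk.edges_transfer] at this
      exact hwe this
    · -- the cycle avoids the new edge, so it lives in the old tree
      have hsub : ∀ x ∈ c0.edges, x ∈ (SimpleGraph.fromEdgeSet (↑r : Set (Sym2 V))).edgeSet := by
        intro x hx
        have := c0.edges_subset_edgeSet hx
        rw [edgeSet_fromEdgeSet] at this ⊢
        refine ⟨?_, this.2⟩
        have h1 := this.1
        simp only [Finset.coe_insert, Set.mem_insert_iff, Finset.mem_coe, Finset.mem_erase] at h1
        rcases h1 with rfl | ⟨-, h1⟩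
        · exact absurd hx hgc
        · exact Finset.mem_coe.2 h1
      exact hr.2.IsAcyclic (c0.transfer _ hsub) (hc0.transfer hsub)

lemma elem_of_mem [DecidableEq V] {G : SimpleGraph V} {r : Finset (Sym2 V)}
    (hr : IsSpanningTreeEdges G r) {a c : V}
    (hGg : s(a, c) ∈ G.edgeSet) (hgr : s(a, c) ∉ r)
    (q : (SimpleGraph.fromEdgeSet (↑r : Set (Sym2 V))).Walk a c) (hq : q.IsPath)
    {e : Sym2 V} (he : e ∈ q.edges) (hae : a ∈ e) :
    ElemMove G r (insert s(a, c) (r.erase e)) := by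
  have her : e ∈ r := by
    have := q.edges_subset_edgeSet he
    rw [edgeSet_fromEdgeSet] at this
    exact Finset.mem_coe.1 this.1
  exact ⟨e, her, s(a, c), hGg, hgr, ⟨a, hae, Sym2.mem_mk_left a c⟩, rfl,
    exchange hr hGg hgr q hq he⟩

lemma chain [DecidableEq V] {G : SimpleGraph V} (n : ℕ) :
    ∀ (r : Finset (Sym2 V)), IsSpanningTreeEdges G r →
      ∀ (a c : V) (q : (SimpleGraph.fromEdgeSet (↑r : Set (Sym2 V))).Walk a c), q.IsPath →
        s(a, c) ∈ G.edgeSet → s(a, c) ∉ r →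
        ∀ (e : Sym2 V) (l1 l2 : List (Sym2 V)), q.edges = l1 ++ e :: l2 → l1.length ≤ n →
        Relation.ReflTransGen (ElemMove G) r (insert s(a, c) (r.erase e)) := by
  induction n with
  | zero =>
    intro r hr a c q hq hGg hgr e l1 l2 hsplit hlen
    have hl1 : l1 = [] := List.length_eq_zero_iff.1 (Nat.le_zero.1 hlen)
    subst hl1
    simp only [List.nil_append] at hsplit
    have he : e ∈ q.edges := by rw [hsplit]; exact List.mem_cons_self
    cases q with
    | nil => simp at hsplit
    | @cons _ d _ h q' =>
      rw [Walk.edges_cons] at hsplit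
      have hed : e = s(a, d) := (List.cons_eq_cons.1 hsplit).1.symm
      refine Relation.ReflTransGen.single (elem_of_mem hr hGg hgr _ hq he ?_)
      rw [hed]; exact Sym2.mem_mk_left a d
  | succ n ih =>
    intro r hr a c q hq hGg hgr e l1 l2 hsplit hlen
    have he : e ∈ q.edges := by rw [hsplit]; exact List.mem_append_right _ (List.mem_cons_self)
    cases q with
    | nil => simp at hsplit
    | @cons _ d _ h q' =>
      rcases l1 with _ | ⟨x, l1'⟩
      · -- e is the first edge: a single move suffices
        simp only [List.nil_append, Walk.edges_cons] at hsplit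
        have hed : e = s(a, d) := (List.cons_eq_cons.1 hsplit).1.symm
        refine Relation.ReflTransGen.single (elem_of_mem hr hGg hgr _ hq he ?_)
        rw [hed]; exact Sym2.mem_mk_left a d
      · -- rotate: first exchange the first edge for the new edge, then recurse
        rw [Walk.edges_cons] at hsplit
        obtain ⟨hx, hsplit'⟩ := List.cons_eq_cons.1 hsplit
        have hadj : G.Adj a c := hGg
        have hac : a ≠ c := hadj.ne
        obtain ⟨hq', haq'⟩ := (Walk.cons_isPath_iff _ _).1 hq
        have he1r : s(a, d) ∈ r := by
          have := h
          rw [fromEdgeSet_adj] at this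
          exact Finset.mem_coe.1 this.1
        have he1q' : s(a, d) ∉ q'.edges := by
          have := hq.edges_nodup
          rw [Walk.edges_cons] at this
          exact (List.nodup_cons.1 this).1
        have heq' : e ∈ q'.edges := by
          rw [hsplit']; exact List.mem_append_right _ (List.mem_cons_self)
        have hee1 : e ≠ s(a, d) := fun hcon => he1q' (hcon ▸ heq')
        have her : e ∈ r := by
          have := q'.edges_subset_edgeSet heq'
          rw [edgeSet_fromEdgeSet] at this
          exact Finset.mem_coe.1 this.1
        have heg : e ≠ s(a, c) := fun hcon => hgr (hcon ▸ her)
        have he1g : s(a, d) ≠ s(a, c) := fun hcon => hgr (hcon ▸ he1r)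
        -- the tree after the first move
        set r' : Finset (Sym2 V) := insert s(a, c) (r.erase s(a, d)) with hr'def
        have hfirst : e ∈ (Walk.cons h q').edges := he
        have hr' : IsSpanningTreeEdges G r' :=
          exchange hr hGg hgr _ hq (by rw [Walk.edges_cons]; exact List.mem_cons_self)
        have hstep : ElemMove G r r' :=
          elem_of_mem hr hGg hgr _ hq (by rw [Walk.edges_cons]; exact List.mem_cons_self)
            (Sym2.mem_mk_left a d)
        -- build the new path from d to a in r'
        have hq'sub : ∀ x ∈ q'.edges, x ∈ (SimpleGraph.fromEdgeSet (↑r' : Set (Sym2 V))).edgeSet := by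
          intro z hz
          have hz' := q'.edges_subset_edgeSet hz
          rw [edgeSet_fromEdgeSet] at hz' ⊢
          refine ⟨?_, hz'.2⟩
          have hzr : z ∈ r := Finset.mem_coe.1 hz'.1
          have hzne : z ≠ s(a, d) := fun hcon => he1q' (hcon ▸ hz)
          simp only [hr'def, Finset.coe_insert, Set.mem_insert_iff, Finset.mem_coe,
            Finset.mem_erase]
          exact Or.inr ⟨hzne, hzr⟩
        have hca : (SimpleGraph.fromEdgeSet (↑r' : Set (Sym2 V))).Adj c a := by
          rw [fromEdgeSet_adj]
          refine ⟨?_, hac.symm⟩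
          rw [Sym2.eq_swap]
          simp [hr'def]
        set p'' : (SimpleGraph.fromEdgeSet (↑r' : Set (Sym2 V))).Walk d a :=
          (q'.transfer _ hq'sub).append (Walk.cons hca Walk.nil) with hp''def
        have hp'' : p''.IsPath := by
          rw [Walk.isPath_def, hp''def, Walk.support_append, Walk.support_transfer]
          simp only [Walk.support_cons, Walk.support_nil, List.tail_cons]
          rw [List.nodup_append]
          refine ⟨hq'.support_nodup, List.nodup_singleton a, ?_⟩
          intro z hz b hb
          rw [List.mem_singleton] at hb
          subst hb
          exact fun hza => haq' (hza ▸ hz)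
        have hp''edges : p''.edges = l1' ++ e :: (l2 ++ [s(c, a)]) := by
          rw [hp''def, Walk.edges_append, Walk.edges_transfer, hsplit']
          simp
        have hda : s(d, a) ∈ G.edgeSet := by
          rw [Sym2.eq_swap]
          exact hr.1 (Finset.mem_coe.2 he1r)
        have hdar' : s(d, a) ∉ r' := by
          rw [Sym2.eq_swap, hr'def]
          simp only [Finset.mem_insert, Finset.mem_erase, not_or]
          exact ⟨he1g, fun hcon => hcon.1 rfl⟩
        have hrest := ih r' hr' d a p'' hp'' hda hdar' e l1' (l2 ++ [s(c, a)]) hp''edges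
          (by simp only [List.length_cons] at hlen; omega)
        -- identify the resulting tree
        have hfinal : insert s(d, a) (r'.erase e) = insert s(a, c) (r.erase e) := by
          rw [Sym2.eq_swap, hr'def, Finset.erase_insert_of_ne (Ne.symm heg)]
          ext z
          simp only [Finset.mem_insert, Finset.mem_erase]
          constructor
          · rintro (rfl | hz)
            · exact Or.inr ⟨Ne.symm hee1, he1r⟩
            · rcases hz with rfl | ⟨hz1, hz2, hz3⟩
              · exact Or.inl rfl
              · exact Or.inr ⟨hz1, hz3⟩
          · rintro (rfl | ⟨hz1, hz2⟩)
            · exact Or.inr (Or.inl rfl)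
            · by_cases hzd : z = s(a, d)
              · exact Or.inl hzd
              · exact Or.inr (Or.inr ⟨hz1, hzd, hz2⟩)
        rw [hfinal] at hrest
        exact (Relation.ReflTransGen.single hstep).trans hrest


lemma card_spanning [Fintype V] [DecidableEq V] {G : SimpleGraph V} {s : Finset (Sym2 V)}
    (hs : IsSpanningTreeEdges G s) : s.card + 1 = Fintype.card V := by
  classical
  have h1 : (SimpleGraph.fromEdgeSet (↑s : Set (Sym2 V))).edgeSet = ↑s := by
    rw [edgeSet_fromEdgeSet]
    ext z
    simp only [Set.mem_diff, Set.mem_setOf_eq, Finset.mem_coe, and_iff_left_iff_imp]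
    intro hz hd
    exact G.not_isDiag_of_mem_edgeSet (hs.1 hz) hd
  haveI : Fintype (SimpleGraph.fromEdgeSet (↑s : Set (Sym2 V))).edgeSet :=
    Set.Finite.fintype (Set.toFinite _)
  have h2 := hs.2.card_edgeFinset
  have h3 : (SimpleGraph.fromEdgeSet (↑s : Set (Sym2 V))).edgeFinset.card = s.card := by
    simp only [SimpleGraph.edgeFinset, ← Set.ncard_eq_toFinset_card', h1, Set.ncard_coe_finset]
  omega


lemma main_aux [Fintype V] [DecidableEq V] {G : SimpleGraph V} {t : Finset (Sym2 V)}
    (ht : IsSpanningTreeEdges G t) (n : ℕ) :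
    ∀ (s : Finset (Sym2 V)), IsSpanningTreeEdges G s → (s \ t).card ≤ n →
      Relation.ReflTransGen (ElemMove G) s t := by
  induction n with
  | zero =>
    intro s hs hcard
    have h0 : s \ t = ∅ := Finset.card_eq_zero.1 (Nat.le_zero.1 hcard)
    have hst : s ⊆ t := by rwa [Finset.sdiff_eq_empty_iff_subset] at h0
    have : s = t := Finset.eq_of_subset_of_card_le hst (by
      have := card_spanning hs; have := card_spanning ht; omega)
    rw [this]
  | succ n ih =>
    intro s hs hcard
    by_cases hst : s = t
    · rw [hst]
    · have hts : (t \ s).Nonempty := by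
        rw [Finset.sdiff_nonempty]
        intro hsub
        exact hst (Finset.eq_of_subset_of_card_le hsub (by
          have := card_spanning hs; have := card_spanning ht; omega)).symm
      obtain ⟨f, hf⟩ := hts
      rw [Finset.mem_sdiff] at hf
      have hfG : f ∈ G.edgeSet := ht.1 hf.1
      revert hf hfG
      induction f using Sym2.ind with
      | _ a b =>
        intro hf hfG
        have hadj : G.Adj a b := hfG
        have hab : a ≠ b := hadj.ne
        obtain ⟨w⟩ := hs.2.isConnected.preconnected a b
        set p := w.toPath with hp
        have hpe : ∀ x ∈ (p : (SimpleGraph.fromEdgeSet (↑s : Set (Sym2 V))).Walk a b).edges,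
            x ∈ s ∧ ¬x.IsDiag := by
          intro x hx
          have := Walk.edges_subset_edgeSet _ hx
          rw [edgeSet_fromEdgeSet] at this
          exact ⟨Finset.mem_coe.1 this.1, this.2⟩
        have hex : ∃ x ∈ (p : (SimpleGraph.fromEdgeSet (↑s : Set (Sym2 V))).Walk a b).edges,
            x ∉ t := by
          by_contra hcon
          push_neg at hcon
          have hsubt : ∀ x ∈ (p : (SimpleGraph.fromEdgeSet (↑s : Set (Sym2 V))).Walk a b).edges,
              x ∈ (SimpleGraph.fromEdgeSet (↑t : Set (Sym2 V))).edgeSet := by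
            intro x hx
            rw [edgeSet_fromEdgeSet]
            exact ⟨Finset.mem_coe.2 (hcon x hx), (hpe x hx).2⟩
          have htadj : (SimpleGraph.fromEdgeSet (↑t : Set (Sym2 V))).Adj a b :=
            (fromEdgeSet_adj _).2 ⟨Finset.mem_coe.2 hf.1, hab⟩
          have hcyc : (Walk.cons htadj
              ((p : (SimpleGraph.fromEdgeSet (↑s : Set (Sym2 V))).Walk a b).transfer _
                hsubt).reverse).IsCycle := by
            rw [Walk.cons_isCycle_iff]
            refine ⟨(p.2.transfer hsubt).reverse, ?_⟩
            rw [Walk.edges_reverse, List.mem_reverse, Walk.edges_transfer]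
            intro hmem
            exact hf.2 (hpe _ hmem).1
          exact ht.2.IsAcyclic _ hcyc
        obtain ⟨e, hep, het⟩ := hex
        obtain ⟨l1, l2, hsplit⟩ := List.append_of_mem hep
        have hchain := chain l1.length s hs a b p.1 p.2 hfG hf.2 e l1 l2 hsplit le_rfl
        have hs' := exchange hs hfG hf.2 p.1 p.2 hep
        have hes : e ∈ s := (hpe e hep).1
        have hsd : (insert s(a, b) (s.erase e)) \ t = (s \ t).erase e := by
          ext z
          simp only [Finset.mem_sdiff, Finset.mem_insert, Finset.mem_erase]
          constructor
          · rintro ⟨rfl | ⟨hz1, hz2⟩, hz3⟩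
            · exact absurd hf.1 hz3
            · exact ⟨hz1, hz2, hz3⟩
          · rintro ⟨hz1, hz2, hz3⟩
            exact ⟨Or.inr ⟨hz1, hz2⟩, hz3⟩
        have hlt : ((insert s(a, b) (s.erase e)) \ t).card ≤ n := by
          rw [hsd, Finset.card_erase_of_mem (Finset.mem_sdiff.2 ⟨hes, het⟩)]
          omega
        exact hchain.trans (ih _ hs' hlt)


end STAux

/-- Any two spanning trees `s`, `t` of a connected finite graph `G` are related by a finite
sequence of elementary moves. -/
theorem spanning_trees_connected_by_elementary_moves
    [Fintype V] [DecidableEq V] (G : SimpleGraph V) (hG : G.Connected)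
    (s t : Finset (Sym2 V))
    (hs : IsSpanningTreeEdges G s) (ht : IsSpanningTreeEdges G t) :
    Relation.ReflTransGen (ElemMove G) s t :=
  STAux.main_aux ht ((s \ t).card) s hs le_rfl
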